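/- For n ≥ 3, the maximum value of pmp_{\underline{1}23}(σ) over σ ∈ S_n is n-2, and the number of σ ∈ S_n with pmp_{\underline{1}23}(σ) = n-2 is exactly (n-2)!. -/
import Mathlib

/-- Number of positions `i` that start an occurrence of the pattern 123 in `σ`,
i.e. `pmp` of the positional marked pattern `\underline{1}23`. -/
noncomputable def pmpS123 {n : ℕ} (σ : Equiv.Perm (Fin n)) : ℕ :=
  Nat.card {i : Fin n // ∃ j k : Fin n, i < j ∧ j < k ∧ σ i < σ j ∧ σ j < σ k}

namespace PmpAux

open Equiv Function

variable {n : ℕ}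

def P (σ : Equiv.Perm (Fin n)) (i : Fin n) : Prop :=
  ∃ j k : Fin n, i < j ∧ j < k ∧ σ i < σ j ∧ σ j < σ k

lemma pmp_eq (σ : Equiv.Perm (Fin n)) : pmpS123 σ = Nat.card {i : Fin n // P σ i} := rfl

lemma P_lt {σ : Equiv.Perm (Fin n)} {i : Fin n} (h : P σ i) : (i : ℕ) < n - 2 := by
  obtain ⟨j, k, hij, hjk, -, -⟩ := h
  have h1 : (i : ℕ) < j := hij
  have h2 : (j : ℕ) < k := hjk
  have h3 := k.isLt
  omega

lemma pmp_le (σ : Equiv.Perm (Fin n)) : pmpS123 σ ≤ n - 2 := by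
  rw [pmp_eq]
  have : Nat.card {i : Fin n // P σ i} ≤ Nat.card (Fin (n - 2)) := by
    apply Nat.card_le_card_of_injective (fun x => (⟨x.1.1, P_lt x.2⟩ : Fin (n - 2)))
    intro x y h
    apply Subtype.ext; apply Fin.ext
    simpa [Fin.ext_iff] using h
  simpa using this

def equiv_lt : {i : Fin n // (i : ℕ) < n - 2} ≃ Fin (n - 2) where
  toFun x := ⟨x.1.1, x.2⟩
  invFun m := ⟨⟨m.1, by omega⟩, m.2⟩
  left_inv x := rfl
  right_inv m := rfl

set_option maxHeartbeats 1600000 in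
lemma max_iff (hn : 3 ≤ n) (σ : Equiv.Perm (Fin n)) :
    pmpS123 σ = n - 2 ↔
      σ ⟨n - 2, by omega⟩ = ⟨n - 2, by omega⟩ ∧ σ ⟨n - 1, by omega⟩ = ⟨n - 1, by omega⟩ := by
  constructor
  · intro hcard
    -- every position with index < n-2 starts an occurrence
    have hall : ∀ i : Fin n, (i : ℕ) < n - 2 → P σ i := by
      have hinj : Function.Injective
          (fun x : {i : Fin n // P σ i} => (⟨x.1.1, P_lt x.2⟩ : Fin (n - 2))) := by
        intro x y h
        apply Subtype.ext; apply Fin.ext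
        simpa [Fin.ext_iff] using h
      have hbij : Function.Bijective
          (fun x : {i : Fin n // P σ i} => (⟨x.1.1, P_lt x.2⟩ : Fin (n - 2))) := by
        rw [Nat.bijective_iff_injective_and_card]
        exact ⟨hinj, by simpa [← pmp_eq] using hcard⟩
      intro i hi
      obtain ⟨x, hx⟩ := hbij.2 ⟨(i : ℕ), hi⟩
      have : x.1 = i := by
        apply Fin.ext
        simpa [Fin.ext_iff] using hx
      exact this ▸ x.2
    obtain ⟨a, hsa⟩ := σ.surjective ⟨n - 1, by omega⟩
    obtain ⟨b, hsb⟩ := σ.surjective ⟨n - 2, by omega⟩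
    obtain ⟨c, hsc⟩ := σ.surjective ⟨n - 3, by omega⟩
    have hPa : ¬ P σ a := by
      rintro ⟨j, k, -, -, haj, -⟩
      rw [hsa] at haj
      have := (σ j).isLt
      have : (n : ℕ) - 1 < (σ j : ℕ) := haj
      omega
    have hPb : ¬ P σ b := by
      rintro ⟨j, k, -, -, hbj, hjk⟩
      rw [hsb] at hbj
      have h1 : (n : ℕ) - 2 < (σ j : ℕ) := hbj
      have h2 : ((σ j) : ℕ) < (σ k : ℕ) := hjk
      have := (σ k).isLt
      omega
    have hav : n - 2 ≤ (a : ℕ) := by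
      by_contra h
      exact hPa (hall a (by omega))
    have hbv : n - 2 ≤ (b : ℕ) := by
      by_contra h
      exact hPb (hall b (by omega))
    have hab : a ≠ b := by
      intro h
      rw [h, hsb] at hsa
      simp [Fin.ext_iff] at hsa
      omega
    have hca : c ≠ a := by
      intro h
      rw [h, hsa] at hsc
      simp [Fin.ext_iff] at hsc
      omega
    have hcb : c ≠ b := by
      intro h
      rw [h, hsb] at hsc
      simp [Fin.ext_iff] at hsc
      omega
    have hcv : (c : ℕ) < n - 2 := by
      have h1 : (a : ℕ) ≠ (b : ℕ) := fun h => hab (Fin.ext h)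
      have h2 : (c : ℕ) ≠ (a : ℕ) := fun h => hca (Fin.ext h)
      have h3 : (c : ℕ) ≠ (b : ℕ) := fun h => hcb (Fin.ext h)
      have := a.isLt; have := b.isLt; have := c.isLt
      omega
    obtain ⟨j, k, hcj, hjk, hscj, hsjk⟩ := hall c hcv
    rw [hsc] at hscj
    have h1 : (n : ℕ) - 3 < (σ j : ℕ) := hscj
    have h2 : ((σ j) : ℕ) < (σ k : ℕ) := hsjk
    have h3 := (σ k).isLt
    have hjb : j = b := by
      apply σ.injective
      rw [hsb]; exact Fin.ext (show ((σ j : Fin n) : ℕ) = n - 2 by omega)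
    have hka : k = a := by
      apply σ.injective
      rw [hsa]; exact Fin.ext (show ((σ k : Fin n) : ℕ) = n - 1 by omega)
    have hba : (b : ℕ) < (a : ℕ) := by rw [← hjb, ← hka]; exact hjk
    have := a.isLt
    have hbeq : b = ⟨n - 2, by omega⟩ := Fin.ext (show (b : ℕ) = n - 2 by omega)
    have haeq : a = ⟨n - 1, by omega⟩ := Fin.ext (show (a : ℕ) = n - 1 by omega)
    exact ⟨by rw [← hbeq, hsb, hbeq], by rw [← haeq, hsa, haeq]⟩
  · rintro ⟨h1, h2⟩
    have key : ∀ i : Fin n, P σ i ↔ (i : ℕ) < n - 2 := by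
      intro i
      constructor
      · exact P_lt
      · intro hi
        refine ⟨⟨n - 2, by omega⟩, ⟨n - 1, by omega⟩, ?_, ?_, ?_, ?_⟩
        · exact hi
        · show (n : ℕ) - 2 < n - 1; omega
        · rw [h1]
          have hne1 : σ i ≠ ⟨n - 2, by omega⟩ := by
            rw [← h1]; intro h
            have := σ.injective h
            simp [Fin.ext_iff] at this; omega
          have hne2 : σ i ≠ ⟨n - 1, by omega⟩ := by
            rw [← h2]; intro h
            have := σ.injective h
            simp [Fin.ext_iff] at this; omega
          have h3 := (σ i).isLt
          have h4 : ((σ i) : ℕ) ≠ n - 2 := fun h => hne1 (Fin.ext h)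
          have h5 : ((σ i) : ℕ) ≠ n - 1 := fun h => hne2 (Fin.ext h)
          show ((σ i) : ℕ) < n - 2; omega
        · rw [h1, h2]; show (n : ℕ) - 2 < n - 1; omega
    rw [pmp_eq]
    rw [Nat.card_congr ((Equiv.subtypeEquivRight key).trans equiv_lt)]
    simp
end PmpAux

theorem stmt1 (n : ℕ) (hn : 3 ≤ n) :
    (∀ σ : Equiv.Perm (Fin n), pmpS123 σ ≤ n - 2) ∧
    (∃ σ : Equiv.Perm (Fin n), pmpS123 σ = n - 2) ∧
    Nat.card {σ : Equiv.Perm (Fin n) // pmpS123 σ = n - 2} = Nat.factorial (n - 2) := by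
  refine ⟨PmpAux.pmp_le, ⟨1, ?_⟩, ?_⟩
  · rw [PmpAux.max_iff hn]; simp
  · have key : ∀ σ : Equiv.Perm (Fin n),
        pmpS123 σ = n - 2 ↔ ∀ x : Fin n, ¬ ((x : ℕ) < n - 2) → σ x = x := by
      intro σ
      rw [PmpAux.max_iff hn σ]
      constructor
      · rintro ⟨h1, h2⟩ x hx
        have hxl := x.isLt
        have : (x : ℕ) = n - 2 ∨ (x : ℕ) = n - 1 := by omega
        rcases this with h | h
        · have : x = ⟨n - 2, by omega⟩ := Fin.ext h
          rw [this]; exact h1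
        · have : x = ⟨n - 1, by omega⟩ := Fin.ext h
          rw [this]; exact h2
      · intro h
        exact ⟨h _ (by simp), h _ (by intro hh; simp at hh; omega)⟩
    rw [Nat.card_congr (Equiv.subtypeEquivRight key)]
    rw [Nat.card_congr ((Equiv.Perm.subtypeEquivSubtypePerm
      (fun x : Fin n => (x : ℕ) < n - 2)).symm)]
    rw [Nat.card_congr (Equiv.permCongr PmpAux.equiv_lt)]
    simp [Nat.card_eq_fintype_card, Fintype.card_perm]
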